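/- The k-linear map M⊗A⊗A → C₂ = M⊗A⊗A⊗B given by m⊗a⊗b ↦ m⊗a⊗b⊗1_B maps ker d₂ into ker ∂₂ and maps im d₃ into im ∂₃. Consequently it induces a well-defined k-linear map Φ² : H₂(A,M) → H₂((A,B,ε);M). -/

import Mathlib

/-!
STATEMENT 9: The k-linear map M⊗A⊗A → C₂ = M⊗A⊗A⊗B given by m⊗a⊗b ↦ m⊗a⊗b⊗1_B maps
ker d₂ into ker ∂₂ and maps im d₃ into im ∂₃.  Consequently it induces a well-defined
k-linear map Φ² : H₂(A,M) → H₂((A,B,ε);M).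

Here (A,B,ε) is a triple over a commutative ring k and M is an A-bimodule on which k
acts centrally and which is B-symmetric; H₂(A,M) = ker d₂ / im d₃ and
H₂((A,B,ε);M) = ker ∂₂ / im ∂₃.  All chain maps are quantified universally,
characterized by their values on pure tensors.
-/

open TensorProduct MulOpposite

set_option maxSynthPendingDepth 8

theorem secondaryHochschild_Phi2_wellDefined
    (k : Type*) [CommRing k]
    (A : Type*) [Ring A] [Algebra k A]
    (B : Type*) [CommRing B] [Algebra k B]
    (ε : B →ₐ[k] A) (hcen : ∀ (b : B) (a : A), ε b * a = a * ε b)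
    (M : Type*) [AddCommGroup M] [Module k M]
    [Module A M] [Module Aᵐᵒᵖ M] [SMulCommClass A Aᵐᵒᵖ M]
    [IsScalarTower k A M] [IsScalarTower k Aᵐᵒᵖ M]
    (hsymm : ∀ (b : B) (m : M), ε b • m = op (ε b) • m)
    -- the usual Hochschild differentials d₂, d₃
    (d2 : M ⊗[k] A ⊗[k] A →ₗ[k] M ⊗[k] A)
    (hd2 : ∀ (m : M) (a b : A),
      d2 (m ⊗ₜ[k] a ⊗ₜ[k] b) =
        (op a • m) ⊗ₜ[k] b - m ⊗ₜ[k] (a * b) + (b • m) ⊗ₜ[k] a)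
    (d3 : M ⊗[k] A ⊗[k] A ⊗[k] A →ₗ[k] M ⊗[k] A ⊗[k] A)
    (hd3 : ∀ (m : M) (a b c : A),
      d3 (m ⊗ₜ[k] a ⊗ₜ[k] b ⊗ₜ[k] c) =
        (op a • m) ⊗ₜ[k] b ⊗ₜ[k] c - m ⊗ₜ[k] (a * b) ⊗ₜ[k] c
        + m ⊗ₜ[k] a ⊗ₜ[k] (b * c) - (c • m) ⊗ₜ[k] a ⊗ₜ[k] b)
    -- the secondary Hochschild differentials ∂₂, ∂₃
    (p2 : M ⊗[k] A ⊗[k] A ⊗[k] B →ₗ[k] M ⊗[k] A)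
    (hp2 : ∀ (m : M) (a b : A) (α : B),
      p2 (m ⊗ₜ[k] a ⊗ₜ[k] b ⊗ₜ[k] α) =
        (op (a * ε α) • m) ⊗ₜ[k] b - m ⊗ₜ[k] (a * ε α * b) + ((b * ε α) • m) ⊗ₜ[k] a)
    (p3 : M ⊗[k] A ⊗[k] A ⊗[k] A ⊗[k] B ⊗[k] B ⊗[k] B →ₗ[k] M ⊗[k] A ⊗[k] A ⊗[k] B)
    (hp3 : ∀ (m : M) (a b c : A) (α β γ : B),
      p3 (m ⊗ₜ[k] a ⊗ₜ[k] b ⊗ₜ[k] c ⊗ₜ[k] α ⊗ₜ[k] β ⊗ₜ[k] γ) =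
        (op (a * ε (α * β)) • m) ⊗ₜ[k] b ⊗ₜ[k] c ⊗ₜ[k] γ
        - m ⊗ₜ[k] (a * ε α * b) ⊗ₜ[k] c ⊗ₜ[k] (β * γ)
        + m ⊗ₜ[k] a ⊗ₜ[k] (b * ε γ * c) ⊗ₜ[k] (α * β)
        - ((c * ε (β * γ)) • m) ⊗ₜ[k] a ⊗ₜ[k] b ⊗ₜ[k] α)
    -- the chain-level map m⊗a⊗b ↦ m⊗a⊗b⊗1_B
    (ι : M ⊗[k] A ⊗[k] A →ₗ[k] M ⊗[k] A ⊗[k] A ⊗[k] B)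
    (hι : ∀ (m : M) (a b : A),
      ι (m ⊗ₜ[k] a ⊗ₜ[k] b) = m ⊗ₜ[k] a ⊗ₜ[k] b ⊗ₜ[k] (1 : B)) :
    (∀ x ∈ LinearMap.ker d2, ι x ∈ LinearMap.ker p2) ∧
    (∀ x ∈ LinearMap.range d3, ι x ∈ LinearMap.range p3) ∧
    ∃ Phi2 : (↥(LinearMap.ker d2) ⧸ (LinearMap.range d3).comap (LinearMap.ker d2).subtype)
        →ₗ[k] (↥(LinearMap.ker p2) ⧸ (LinearMap.range p3).comap (LinearMap.ker p2).subtype),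
      ∀ (x : M ⊗[k] A ⊗[k] A) (hx : x ∈ LinearMap.ker d2) (hx' : ι x ∈ LinearMap.ker p2),
        Phi2 (Submodule.Quotient.mk ⟨x, hx⟩) = Submodule.Quotient.mk ⟨ι x, hx'⟩ := by

  -- key identity: p2 ∘ ι = d2
  have h12 : ∀ x : M ⊗[k] A ⊗[k] A, p2 (ι x) = d2 x := by
    intro x
    induction x using TensorProduct.induction_on with
    | zero => simp
    | add x y hx hy => simp [map_add, hx, hy]
    | tmul m y =>
      induction m using TensorProduct.induction_on with
      | zero => simp
      | add u v hu hv => simp only [TensorProduct.add_tmul, map_add, hu, hv]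
      | tmul a b => simp [hι, hp2, hd2]
  -- ι of boundaries are boundaries
  have h33 : ∀ x : M ⊗[k] A ⊗[k] A ⊗[k] A, ι (d3 x) ∈ LinearMap.range p3 := by
    intro x
    induction x using TensorProduct.induction_on with
    | zero => simp
    | add x y hx hy =>
      rw [map_add, map_add]; exact Submodule.add_mem _ hx hy
    | tmul m y =>
      induction m using TensorProduct.induction_on with
      | zero => simp
      | add u v hu hv =>
        rw [TensorProduct.add_tmul, map_add, map_add]
        exact Submodule.add_mem _ hu hv
      | tmul a z =>
        induction a using TensorProduct.induction_on with
        | zero => simp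
        | add u v hu hv =>
          rw [TensorProduct.add_tmul, TensorProduct.add_tmul, map_add, map_add]
          exact Submodule.add_mem _ hu hv
        | tmul b c =>
          refine ⟨b ⊗ₜ[k] c ⊗ₜ[k] z ⊗ₜ[k] y ⊗ₜ[k] (1:B) ⊗ₜ[k] (1:B) ⊗ₜ[k] (1:B), ?_⟩
          simp [hp3, hd3, hι, map_sub, map_add]
  have hker : ∀ x ∈ LinearMap.ker d2, ι x ∈ LinearMap.ker p2 := by
    intro x hx
    rw [LinearMap.mem_ker] at hx ⊢
    rw [h12, hx]
  have hrange : ∀ x ∈ LinearMap.range d3, ι x ∈ LinearMap.range p3 := by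
    rintro x ⟨y, rfl⟩
    exact h33 y
  refine ⟨hker, hrange, ?_⟩
  refine ⟨Submodule.liftQ _ ((Submodule.mkQ _).comp
      (ι.restrict (p := LinearMap.ker d2) (q := LinearMap.ker p2) hker)) ?_, ?_⟩
  · rintro ⟨x, hx⟩ hmem
    rw [Submodule.mem_comap] at hmem
    rw [LinearMap.mem_ker, LinearMap.comp_apply, Submodule.mkQ_apply,
      Submodule.Quotient.mk_eq_zero, Submodule.mem_comap]
    exact hrange x hmem
  · intro x hx hx'
    rfl
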